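/- Consider the common-pool resource payoff on [0,1]^N obtained by substituting the equilibrium resource R*(p) = N / Σ_j (1 − δ p_j): benefit b_i(p) = (1 − δ p_i)(N / Σ_j (1 − δ p_j) − 1) and cost c_i(p_i) = γ p_i, where 0 < δ < 1 and γ > 0. Then for every p̂ ∈ [0,1]^N and every i, Σ_{j=1}^{N} ∂b_j/∂p_i(p̂) = δ; consequently condition (3), Σ_j ∂b_j/∂p_i(p̂) ≥ c_i′(p̂_i), holds at every p̂ ∈ [0,1]^N if and only if δ ≥ γ. -/

import Mathlib

/-- In the common-pool resource problem with equilibrium resource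
`R*(p) = N / ∑ j (1 - δ p j)`, benefit `b i p = (1 - δ p i) * (N / ∑ j (1 - δ p j) - 1)` and
cost `c i x = γ x` (`0 < δ < 1`, `γ > 0`), for every point `phat` of the cube
`∑ j, ∂b_j/∂p_i (phat) = δ`; consequently condition (3) holds everywhere on the cube
if and only if `δ ≥ γ`. -/
theorem common_pool_resource_condition3
    (N : ℕ) (hN : 0 < N)
    (δ γ : ℝ) (hδ0 : 0 < δ) (hδ1 : δ < 1) (hγ : 0 < γ)
    (b : Fin N → (Fin N → ℝ) → ℝ) (c : Fin N → ℝ → ℝ)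
    (hb : ∀ i, b i = fun p =>
      (1 - δ * p i) * ((N : ℝ) / (∑ j : Fin N, (1 - δ * p j)) - 1))
    (hc : ∀ i, c i = fun x => γ * x) :
    (∀ phat ∈ Set.Icc (0 : Fin N → ℝ) 1, ∀ i : Fin N,
      ∑ j : Fin N, fderiv ℝ (b j) phat (Pi.single i 1) = δ) ∧
    ((∀ phat ∈ Set.Icc (0 : Fin N → ℝ) 1, ∀ i : Fin N,
      ∑ j : Fin N, fderiv ℝ (b j) phat (Pi.single i 1) ≥ deriv (c i) (phat i))
      ↔ δ ≥ γ) := by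
  have hderivc : ∀ i x, deriv (c i) x = γ := by
    intro i x
    rw [hc i]
    simpa using ((hasDerivAt_id x).const_mul γ).deriv
  have key : ∀ phat ∈ Set.Icc (0 : Fin N → ℝ) 1, ∀ i : Fin N,
      ∑ j : Fin N, fderiv ℝ (b j) phat (Pi.single i 1) = δ := by
    intro phat hphat i
    set S : ℝ := ∑ j : Fin N, (1 - δ * phat j) with hS
    have hSpos : 0 < S := by
      apply Finset.sum_pos
      · intro j _
        have h1 : phat j ≤ 1 := by simpa using hphat.2 j
        nlinarith
      · have : Nonempty (Fin N) := Fin.pos_iff_nonempty.mp hN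
        exact Finset.univ_nonempty
    have hSne : S ≠ 0 := hSpos.ne'
    set Sder : (Fin N → ℝ) →L[ℝ] ℝ :=
      ∑ j : Fin N, (-δ) • (ContinuousLinearMap.proj j : (Fin N → ℝ) →L[ℝ] ℝ) with hSder'
    have hSder : HasFDerivAt (fun p : Fin N → ℝ => ∑ j : Fin N, (1 - δ * p j)) Sder phat := by
      rw [hSder']
      apply HasFDerivAt.fun_sum
      intro j _
      have hproj := (ContinuousLinearMap.proj (R := ℝ) (φ := fun _ : Fin N => ℝ) j).hasFDerivAt (x := phat)
      have h := (hproj.const_mul δ).const_sub 1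
      convert h using 1
      ext v
      simp
      exact neg_smul δ _
    have hL : ∀ j : Fin N, HasFDerivAt (b j)
        ((1 - δ * phat j) • ((N:ℝ) • (-(S^2)⁻¹ • Sder)) +
          ((N:ℝ) * S⁻¹ - 1) • (-(δ • (ContinuousLinearMap.proj j : (Fin N → ℝ) →L[ℝ] ℝ)))) phat := by
      intro j
      have hproj := (ContinuousLinearMap.proj (R := ℝ) (φ := fun _ : Fin N => ℝ) j).hasFDerivAt (x := phat)
      have hf := (hproj.const_mul δ).const_sub 1
      have hinv := (hasDerivAt_inv hSne).comp_hasFDerivAt phat hSder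
      have hg := (hinv.const_mul (N:ℝ)).sub_const 1
      have hmul := hf.mul hg
      rw [hb j]
      exact hmul
    have hval : ∀ j : Fin N, (fderiv ℝ (b j) phat) (Pi.single i 1) =
        (1 - δ * phat j) * ((N:ℝ) * ((S^2)⁻¹ * δ)) +
          ((N:ℝ) * S⁻¹ - 1) * (-δ * (if j = i then 1 else 0)) := by
      intro j
      rw [(hL j).fderiv]
      simp [hSder', ContinuousLinearMap.sum_apply, Pi.single_apply,
        Finset.mul_sum, Finset.sum_ite_eq', mul_comm, mul_left_comm]
      split <;> ring
    rw [Finset.sum_congr rfl (fun j _ => hval j), Finset.sum_add_distrib,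
      ← Finset.sum_mul]
    rw [← hS]
    have h2 : ∑ j : Fin N, ((N:ℝ) * S⁻¹ - 1) * (-δ * (if j = i then 1 else 0))
        = ((N:ℝ) * S⁻¹ - 1) * (-δ) := by
      simp [mul_ite, Finset.sum_ite_eq']
    rw [h2]
    field_simp
    ring
  refine ⟨key, ?_, ?_⟩
  · intro h
    have h0 : (0 : Fin N → ℝ) ∈ Set.Icc (0 : Fin N → ℝ) 1 :=
      ⟨le_refl _, fun j => zero_le_one⟩
    have hcon := h 0 h0 ⟨0, hN⟩
    rwa [key 0 h0 ⟨0, hN⟩, hderivc] at hcon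
  · intro hδγ phat hphat i
    rw [key phat hphat i, hderivc]
    exact hδγ
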